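/- In the group β = ⟨u, v₁, v₂ | u² = v₁v₂, v₁^{b₁} = v₂^{b₂} = 1⟩ with gcd(b₁, b₂) = 1, the element v₁⁻¹u normally generates β. -/

import Mathlib

/-- Generators `u, v₁, v₂`. -/
inductive GenP : Type
  | u | v₁ | v₂
deriving DecidableEq

/-- Relators of the presentation `⟨u,v₁,v₂ | u² = v₁v₂, v₁^{b₁} = v₂^{b₂} = 1⟩` of the
orbifold fundamental group of `P²(b₁,b₂)`. -/
def relsP (b₁ b₂ : ℕ) : Set (FreeGroup GenP) :=
  { FreeGroup.of GenP.u ^ 2 * (FreeGroup.of GenP.v₁ * FreeGroup.of GenP.v₂)⁻¹,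
    FreeGroup.of GenP.v₁ ^ b₁, FreeGroup.of GenP.v₂ ^ b₂ }

lemma relsP_one (b₁ b₂ : ℕ) {r : FreeGroup GenP} (hr : r ∈ relsP b₁ b₂) :
    PresentedGroup.mk (relsP b₁ b₂) r = 1 := by
  exact PresentedGroup.one_of_mem hr

theorem projective_base_weight_one (b₁ b₂ : ℕ) (h : Nat.Coprime b₁ b₂) :
    Subgroup.normalClosure
      ({(PresentedGroup.of GenP.v₁)⁻¹ * PresentedGroup.of GenP.u} :
        Set (PresentedGroup (relsP b₁ b₂))) = ⊤ := by
  set G := PresentedGroup (relsP b₁ b₂)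
  set N := Subgroup.normalClosure
      ({(PresentedGroup.of GenP.v₁)⁻¹ * PresentedGroup.of GenP.u} : Set G)
  have hN : N.Normal := Subgroup.normalClosure_normal
  let π : G →* G ⧸ N := QuotientGroup.mk' N
  -- relations in G
  have h1 : (PresentedGroup.of GenP.u : G) ^ 2 =
      PresentedGroup.of GenP.v₁ * PresentedGroup.of GenP.v₂ := by
    have := relsP_one b₁ b₂ (r := FreeGroup.of GenP.u ^ 2 *
      (FreeGroup.of GenP.v₁ * FreeGroup.of GenP.v₂)⁻¹) (by left; rfl)
    rw [map_mul, map_inv, map_mul, map_pow, mul_inv_eq_one] at this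
    exact this
  have h2 : (PresentedGroup.of GenP.v₁ : G) ^ b₁ = 1 := by
    have := relsP_one b₁ b₂ (r := FreeGroup.of GenP.v₁ ^ b₁) (by right; left; rfl)
    rw [map_pow] at this
    exact this
  have h3 : (PresentedGroup.of GenP.v₂ : G) ^ b₂ = 1 := by
    have := relsP_one b₁ b₂ (r := FreeGroup.of GenP.v₂ ^ b₂) (by right; right; rfl)
    rw [map_pow] at this
    exact this
  -- in the quotient, u = v₁
  have hs : π ((PresentedGroup.of GenP.v₁)⁻¹ * PresentedGroup.of GenP.u) = 1 := by
    rw [← MonoidHom.mem_ker, QuotientGroup.ker_mk']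
    exact Subgroup.subset_normalClosure rfl
  have huv : π (PresentedGroup.of GenP.u) = π (PresentedGroup.of GenP.v₁) := by
    rw [map_mul, map_inv, inv_mul_eq_one] at hs
    exact hs.symm
  have hv2 : π (PresentedGroup.of GenP.v₂) = π (PresentedGroup.of GenP.v₁) := by
    have := congrArg π h1
    rw [map_pow, map_mul, huv, pow_two] at this
    exact (mul_left_cancel this).symm
  have hub1 : π (PresentedGroup.of GenP.u) ^ b₁ = 1 := by
    rw [huv, ← map_pow, h2, map_one]
  have hub2 : π (PresentedGroup.of GenP.u) ^ b₂ = 1 := by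
    rw [huv, ← hv2, ← map_pow, h3, map_one]
  have hu1 : π (PresentedGroup.of GenP.u) = 1 := by
    have d1 : orderOf (π (PresentedGroup.of GenP.u)) ∣ b₁ := orderOf_dvd_of_pow_eq_one hub1
    have d2 : orderOf (π (PresentedGroup.of GenP.u)) ∣ b₂ := orderOf_dvd_of_pow_eq_one hub2
    have : orderOf (π (PresentedGroup.of GenP.u)) ∣ 1 := h ▸ Nat.dvd_gcd d1 d2
    exact orderOf_eq_one_iff.mp (Nat.dvd_one.mp this)
  have hgen : ∀ x : GenP, (PresentedGroup.of x : G) ∈ N := by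
    have hker : ∀ g : G, π g = 1 → g ∈ N := by
      intro g hg
      have := (QuotientGroup.eq_one_iff g).mp hg
      exact this
    intro x
    cases x
    · exact hker _ hu1
    · exact hker _ (huv ▸ hu1)
    · exact hker _ (by rw [hv2, ← huv, hu1])
  rw [eq_top_iff, ← PresentedGroup.closure_range_of (relsP b₁ b₂)]
  exact Subgroup.closure_le N |>.mpr (by rintro _ ⟨x, rfl⟩; exact hgen x)
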